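/- Generalized pairing lemma: consider a Maker-Breaker domination game on a graph G, and suppose at some moment Dominator has claimed the vertex set X and Staller the vertex set Y. If there exists a matching M in G − (X ∪ Y) such that every vertex of G not covered by M lies in N_G[X], then Dominator has a strategy to win the continuation of the game regardless of who moves next, using at most |X| + |M| moves in total. -/
import Mathlib


open SimpleGraph

namespace MBD

variable {V : Type*}

/-- Dominator's claimed set `D` is a dominating set of `G`. -/
def Dominates (G : SimpleGraph V) (D : Finset V) : Prop :=
  ∀ v : V, ∃ d ∈ D, d = v ∨ G.Adj d v

/-- Staller's claimed set `S` contains the whole closed neighborhood of some vertex. -/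
def StallerWinSet (G : SimpleGraph V) (S : Finset V) : Prop :=
  ∃ v : V, ∀ u : V, (u = v ∨ G.Adj u v) → u ∈ S

variable [DecidableEq V]

mutual
  /-- `DomD G k D S`: with Dominator having claimed `D`, Staller `S`, and Dominator to
  move, Dominator has a strategy winning the Maker-Breaker domination game on `G`
  using at most `k` further moves of his own. -/
  inductive DomD (G : SimpleGraph V) : ℕ → Finset V → Finset V → Prop
    | win {k : ℕ} {D S : Finset V} : Dominates G D → DomD G k D S
    | move {k : ℕ} {D S : Finset V} (v : V) : v ∉ D → v ∉ S →
        DomS G k (insert v D) S → DomD G (k + 1) D S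
  /-- Like `DomD`, but it is Staller's turn to move. -/
  inductive DomS (G : SimpleGraph V) : ℕ → Finset V → Finset V → Prop
    | win {k : ℕ} {D S : Finset V} : Dominates G D → DomS G k D S
    | move {k : ℕ} {D S : Finset V} : (∃ v : V, v ∉ D ∧ v ∉ S) →
        (∀ v : V, v ∉ D → v ∉ S → DomD G k D (insert v S)) → DomS G k D S
end

mutual
  /-- `StallD G k D S`: with Dominator having claimed `D`, Staller `S`, and Dominator to
  move, Staller has a strategy winning (claiming a whole closed neighborhood) within at
  most `k` further moves of her own. -/
  inductive StallD (G : SimpleGraph V) : ℕ → Finset V → Finset V → Prop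
    | win {k : ℕ} {D S : Finset V} : StallerWinSet G S → StallD G k D S
    | move {k : ℕ} {D S : Finset V} : (∃ v : V, v ∉ D ∧ v ∉ S) →
        (∀ v : V, v ∉ D → v ∉ S → StallS G k (insert v D) S) → StallD G k D S
  /-- Like `StallD`, but it is Staller's turn to move. -/
  inductive StallS (G : SimpleGraph V) : ℕ → Finset V → Finset V → Prop
    | win {k : ℕ} {D S : Finset V} : StallerWinSet G S → StallS G k D S
    | move {k : ℕ} {D S : Finset V} (v : V) : v ∉ D → v ∉ S →
        StallD G k D (insert v S) → StallS G (k + 1) D S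
end

/-- Dominator has a winning strategy in the D-game (Dominator starts). -/
def DominatorWinsD (G : SimpleGraph V) : Prop := ∃ k, DomD G k ∅ ∅

/-- Dominator has a winning strategy in the S-game (Staller starts). -/
def DominatorWinsS (G : SimpleGraph V) : Prop := ∃ k, DomS G k ∅ ∅

/-- Staller has a winning strategy in the D-game (Dominator starts). -/
def StallerWinsD (G : SimpleGraph V) : Prop := ∃ k, StallD G k ∅ ∅

/-- Staller has a winning strategy in the S-game (Staller starts). -/
def StallerWinsS (G : SimpleGraph V) : Prop := ∃ k, StallS G k ∅ ∅

/-- Outcome `𝒟`: Dominator wins both the D-game and the S-game. -/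
def outcomeD (G : SimpleGraph V) : Prop := DominatorWinsD G ∧ DominatorWinsS G

/-- Outcome `𝒮`: Staller wins both the D-game and the S-game. -/
def outcomeS (G : SimpleGraph V) : Prop := StallerWinsD G ∧ StallerWinsS G

/-- Outcome `𝒩`: the first player wins in both games. -/
def outcomeN (G : SimpleGraph V) : Prop := DominatorWinsD G ∧ StallerWinsS G

/-- `γ_MB(G)`: the minimum number of Dominator's moves needed to win the D-game,
`∞` if he has no winning strategy. -/
noncomputable def gMB (G : SimpleGraph V) : ℕ∞ :=
  sInf ((fun k : ℕ => (k : ℕ∞)) '' {k | DomD G k ∅ ∅})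

/-- `γ_MB'(G)`: the minimum number of Dominator's moves needed to win the S-game. -/
noncomputable def gMB' (G : SimpleGraph V) : ℕ∞ :=
  sInf ((fun k : ℕ => (k : ℕ∞)) '' {k | DomS G k ∅ ∅})

/-- `γ_SMB(G)`: the minimum number of Staller's moves needed to win the D-game. -/
noncomputable def gSMB (G : SimpleGraph V) : ℕ∞ :=
  sInf ((fun k : ℕ => (k : ℕ∞)) '' {k | StallD G k ∅ ∅})

/-- `γ_SMB'(G)`: the minimum number of Staller's moves needed to win the S-game. -/
noncomputable def gSMB' (G : SimpleGraph V) : ℕ∞ :=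
  sInf ((fun k : ℕ => (k : ℕ∞)) '' {k | StallS G k ∅ ∅})

end MBD

private lemma mbd_pairing_aux {V : Type*} [Fintype V] [DecidableEq V] (G : SimpleGraph V) :
    ∀ n (M : Finset (V × V)) (X Y : Finset V), M.card = n → Disjoint X Y →
    (∀ p ∈ M, G.Adj p.1 p.2) →
    (∀ p ∈ M, p.1 ∉ X ∪ Y ∧ p.2 ∉ X ∪ Y) →
    (∀ p ∈ M, ∀ q ∈ M, p ≠ q →
      p.1 ≠ q.1 ∧ p.1 ≠ q.2 ∧ p.2 ≠ q.1 ∧ p.2 ≠ q.2) →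
    (∀ v : V, (∀ p ∈ M, v ≠ p.1 ∧ v ≠ p.2) → ∃ x ∈ X, x = v ∨ G.Adj x v) →
    MBD.DomD G n X Y ∧ MBD.DomS G n X Y := by
  intro n
  induction n with
  | zero =>
    intro M X Y hc hXY hadj havoid hdisj hcover
    have hM : M = ∅ := Finset.card_eq_zero.mp hc
    subst hM
    have hdom : MBD.Dominates G X := fun v => hcover v (by simp)
    exact ⟨MBD.DomD.win hdom, MBD.DomS.win hdom⟩
  | succ n ih =>
    intro M X Y hc hXY hadj havoid hdisj hcover
    obtain ⟨p, hp⟩ : ∃ p, p ∈ M := Finset.card_pos.mp (by omega)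
    have key : ∀ p ∈ M, ∀ w u : V, ((w = p.1 ∧ u = p.2) ∨ (w = p.2 ∧ u = p.1)) →
        ∀ Y' : Finset V, Disjoint (insert w X) Y' →
        (∀ q ∈ M.erase p, q.1 ∉ Y' ∧ q.2 ∉ Y') →
        MBD.DomS G n (insert w X) Y' := by
      intro p hp w u hwu Y' hdisj' hY'
      refine (ih (M.erase p) (insert w X) Y' ?_ hdisj' ?_ ?_ ?_ ?_).2
      · rw [Finset.card_erase_of_mem hp, hc]; rfl
      · intro q hq; exact hadj q (Finset.mem_of_mem_erase hq)
      · intro q hq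
        obtain ⟨hq1, hq2⟩ := havoid q (Finset.mem_of_mem_erase hq)
        have hne := hdisj q (Finset.mem_of_mem_erase hq) p hp (Finset.ne_of_mem_erase hq)
        simp only [Finset.mem_union, not_or] at hq1 hq2
        obtain ⟨hqY1, hqY2⟩ := hY' q hq
        constructor <;> simp only [Finset.mem_union, Finset.mem_insert, not_or] <;>
          rcases hwu with ⟨rfl, rfl⟩ | ⟨rfl, rfl⟩ <;> tauto
      · intro a ha b hb hab
        exact hdisj a (Finset.mem_of_mem_erase ha) b (Finset.mem_of_mem_erase hb) hab
      · intro u' hu'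
        by_cases h1 : u' = p.1 ∨ u' = p.2
        · refine ⟨w, Finset.mem_insert_self _ _, ?_⟩
          rcases hwu with ⟨rfl, -⟩ | ⟨rfl, -⟩ <;> rcases h1 with rfl | rfl
          · exact Or.inl rfl
          · exact Or.inr (hadj p hp)
          · exact Or.inr (hadj p hp).symm
          · exact Or.inl rfl
        · push_neg at h1
          obtain ⟨x, hx, hx'⟩ := hcover u' (fun q hq => by
            by_cases hqp : q = p
            · subst hqp; exact ⟨h1.1, h1.2⟩
            · exact hu' q (Finset.mem_erase.mpr ⟨hqp, hq⟩))
          exact ⟨x, Finset.mem_insert_of_mem hx, hx'⟩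
    have hp1 := havoid p hp
    simp only [Finset.mem_union, not_or] at hp1
    have hYerase : ∀ q ∈ M.erase p, q.1 ∉ Y ∧ q.2 ∉ Y := by
      intro q hq
      have := havoid q (Finset.mem_of_mem_erase hq)
      simp only [Finset.mem_union, not_or] at this
      exact ⟨this.1.2, this.2.2⟩
    constructor
    · exact MBD.DomD.move p.1 hp1.1.1 hp1.1.2
        (key p hp p.1 p.2 (Or.inl ⟨rfl, rfl⟩) Y
          (Finset.disjoint_insert_left.mpr ⟨hp1.1.2, hXY⟩) hYerase)
    · refine MBD.DomS.move ⟨p.1, hp1.1.1, hp1.1.2⟩ ?_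
      intro v hvX hvY
      by_cases hv : ∃ q ∈ M, v = q.1 ∨ v = q.2
      · obtain ⟨q, hq, hvq⟩ := hv
        have hq1 := havoid q hq
        simp only [Finset.mem_union, not_or] at hq1
        have hadjq := hadj q hq
        have hYer : ∀ r ∈ M.erase q, r.1 ∉ Y ∧ r.2 ∉ Y := by
          intro r hr
          have := havoid r (Finset.mem_of_mem_erase hr)
          simp only [Finset.mem_union, not_or] at this
          exact ⟨this.1.2, this.2.2⟩
        have hner : ∀ r ∈ M.erase q, r.1 ≠ v ∧ r.2 ≠ v := by
          intro r hr
          have hne := hdisj r (Finset.mem_of_mem_erase hr) q hq (Finset.ne_of_mem_erase hr)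
          rcases hvq with rfl | rfl <;> exact ⟨by tauto, by tauto⟩
        rcases hvq with rfl | rfl
        · -- Staller played q.1; Dominator answers q.2
          refine MBD.DomD.move q.2 hq1.2.1 ?_ ?_
          · simp only [Finset.mem_insert, not_or]
            exact ⟨hadjq.ne', hq1.2.2⟩
          · refine key q hq q.2 q.1 (Or.inr ⟨rfl, rfl⟩) (insert q.1 Y) ?_ ?_
            · refine Finset.disjoint_insert_left.mpr ⟨?_, ?_⟩
              · simp only [Finset.mem_insert, not_or]
                exact ⟨hadjq.ne', hq1.2.2⟩
              · exact Finset.disjoint_insert_right.mpr ⟨hq1.1.1, hXY⟩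
            · intro r hr
              obtain ⟨h1, h2⟩ := hYer r hr
              obtain ⟨h3, h4⟩ := hner r hr
              simp only [Finset.mem_insert, not_or]
              exact ⟨⟨h3, h1⟩, h4, h2⟩
        · -- Staller played q.2; Dominator answers q.1
          refine MBD.DomD.move q.1 hq1.1.1 ?_ ?_
          · simp only [Finset.mem_insert, not_or]
            exact ⟨hadjq.ne, hq1.1.2⟩
          · refine key q hq q.1 q.2 (Or.inl ⟨rfl, rfl⟩) (insert q.2 Y) ?_ ?_
            · refine Finset.disjoint_insert_left.mpr ⟨?_, ?_⟩
              · simp only [Finset.mem_insert, not_or]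
                exact ⟨hadjq.ne, hq1.1.2⟩
              · exact Finset.disjoint_insert_right.mpr ⟨hq1.2.1, hXY⟩
            · intro r hr
              obtain ⟨h1, h2⟩ := hYer r hr
              obtain ⟨h3, h4⟩ := hner r hr
              simp only [Finset.mem_insert, not_or]
              exact ⟨⟨h3, h1⟩, h4, h2⟩
      · push_neg at hv
        refine MBD.DomD.move p.1 hp1.1.1 ?_ ?_
        · simp only [Finset.mem_insert, not_or]
          exact ⟨fun h => (hv p hp).1 h.symm, hp1.1.2⟩
        · refine key p hp p.1 p.2 (Or.inl ⟨rfl, rfl⟩) (insert v Y) ?_ ?_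
          · refine Finset.disjoint_insert_left.mpr ⟨?_, ?_⟩
            · simp only [Finset.mem_insert, not_or]
              exact ⟨fun h => (hv p hp).1 h.symm, hp1.1.2⟩
            · exact Finset.disjoint_insert_right.mpr ⟨hvX, hXY⟩
          · intro r hr
            obtain ⟨h1, h2⟩ := hYerase r hr
            have hvr := hv r (Finset.mem_of_mem_erase hr)
            simp only [Finset.mem_insert, not_or]
            exact ⟨⟨fun h => hvr.1 h.symm, h1⟩, fun h => hvr.2 h.symm, h2⟩

/-- Generalized pairing lemma: if at some moment Dominator has claimed `X` and Staller
`Y`, and there is a matching `M` of `G` avoiding `X ∪ Y` such that every vertex not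
covered by `M` lies in `N_G[X]`, then Dominator wins the continuation of the game no
matter who moves next, using at most `|M|` further moves (hence `|X| + |M|` moves in
total). -/
theorem stmt_3 {V : Type*} [Fintype V] [DecidableEq V] (G : SimpleGraph V)
    (X Y : Finset V) (hXY : Disjoint X Y)
    (M : Finset (V × V))
    (hadj : ∀ p ∈ M, G.Adj p.1 p.2)
    (havoid : ∀ p ∈ M, p.1 ∉ X ∪ Y ∧ p.2 ∉ X ∪ Y)
    (hdisj : ∀ p ∈ M, ∀ q ∈ M, p ≠ q →
      p.1 ≠ q.1 ∧ p.1 ≠ q.2 ∧ p.2 ≠ q.1 ∧ p.2 ≠ q.2)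
    (hcover : ∀ v : V, (∀ p ∈ M, v ≠ p.1 ∧ v ≠ p.2) → ∃ x ∈ X, x = v ∨ G.Adj x v) :
    MBD.DomD G M.card X Y ∧ MBD.DomS G M.card X Y := by
  exact mbd_pairing_aux G M.card M X Y rfl hXY hadj havoid hdisj hcover
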